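/- arXiv:2204.11709 — 2 statements merged into one kernel-verified Lean document; each statement's English description precedes it below -/
import Mathlib

section
/- Let n ≥ 1, let g be a real symmetric positive definite n×n matrix, and let L be a real n×n matrix such that gL is symmetric and such that every real eigenvalue μ of L (i.e., every μ ∈ ℝ for which Lx = μx has a nonzero solution x ∈ ℝⁿ) satisfies |μ| ≤ 1/ρ, where ρ > 0. Then for every ε ∈ [0, ρ) and every t ∈ [−1,1], the matrix G := g (I − εtL)² is symmetric and satisfies the Loewner-order inequalities (1 − ε/ρ)² g ≼ G ≼ (1 + ε/ρ)² g, i.e., G − (1 − ε/ρ)² g and (1 + ε/ρ)² g − G are positive semidefinite. -/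
open Matrix

/-- Conjugation identity coming from the spectral theorem. -/
lemma diag_conj_aux {n : ℕ} {M : Matrix (Fin n) (Fin n) ℝ} (hM : M.IsHermitian) (s c : ℝ) :
    (1 - s • M) * (1 - s • M) - c • (1 : Matrix (Fin n) (Fin n) ℝ) =
      (hM.eigenvectorUnitary : Matrix (Fin n) (Fin n) ℝ) *
        Matrix.diagonal (fun i => (1 - s * hM.eigenvalues i) ^ 2 - c) *
        star (hM.eigenvectorUnitary : Matrix (Fin n) (Fin n) ℝ) := by
  set U : Matrix (Fin n) (Fin n) ℝ := (hM.eigenvectorUnitary : Matrix (Fin n) (Fin n) ℝ) with hUdef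
  set d : Fin n → ℝ := hM.eigenvalues with hddef
  set D : Matrix (Fin n) (Fin n) ℝ := Matrix.diagonal d with hDdef
  have hU1 : U * star U = 1 := (Matrix.mem_unitaryGroup_iff).mp hM.eigenvectorUnitary.2
  have hU2 : star U * U = 1 := (Matrix.mem_unitaryGroup_iff').mp hM.eigenvectorUnitary.2
  have hU2' : ∀ X : Matrix (Fin n) (Fin n) ℝ, star U * (U * X) = X := fun X => by
    rw [← mul_assoc, hU2, one_mul]
  have hs : M = U * D * star U := by
    have := hM.spectral_theorem
    simpa [hUdef, hddef, hDdef] using this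
  have conjmul : ∀ A B : Matrix (Fin n) (Fin n) ℝ,
      (U * A * star U) * (U * B * star U) = U * (A * B) * star U := fun A B => by
    simp only [mul_assoc, hU2']
  have conjsub : ∀ A B : Matrix (Fin n) (Fin n) ℝ,
      (U * A * star U) - (U * B * star U) = U * (A - B) * star U := fun A B => by
    rw [Matrix.mul_sub, Matrix.sub_mul]
  have hone : (1 : Matrix (Fin n) (Fin n) ℝ) = U * 1 * star U := by rw [mul_one, hU1]
  have hsmul : c • (1 : Matrix (Fin n) (Fin n) ℝ) = U * (c • 1) * star U := by
    rw [Matrix.mul_smul, Matrix.smul_mul, mul_one, hU1]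
  have hMconj : (1 : Matrix (Fin n) (Fin n) ℝ) - s • M = U * (1 - s • D) * star U := by
    rw [← conjsub, ← hone, hs, Matrix.mul_smul, Matrix.smul_mul]
  have e3 : ((1 : Matrix (Fin n) (Fin n) ℝ) - s • D) * (1 - s • D) - c • 1
      = Matrix.diagonal (fun i => (1 - s * d i) ^ 2 - c) := by
    have e1 : (1 : Matrix (Fin n) (Fin n) ℝ) - s • D = Matrix.diagonal (fun i => 1 - s * d i) := by
      rw [hDdef, ← Matrix.diagonal_one, ← Matrix.diagonal_smul, ← Matrix.diagonal_sub]
      congr 1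
    have e2 : c • (1 : Matrix (Fin n) (Fin n) ℝ) = Matrix.diagonal (fun _ => c) := by
      ext i j
      rcases eq_or_ne i j with rfl | h
      · simp
      · simp [Matrix.one_apply_ne h, Matrix.diagonal_apply_ne _ h]
    rw [e1, e2, Matrix.diagonal_mul_diagonal, ← Matrix.diagonal_sub]
    have hfun : (fun i => (1 - s * d i) * (1 - s * d i)) = fun i => (1 - s * d i) ^ 2 :=
      funext fun i => (pow_two _).symm
    rw [hfun]
  calc (1 - s • M) * (1 - s • M) - c • (1 : Matrix (Fin n) (Fin n) ℝ)
      = (U * (1 - s • D) * star U) * (U * (1 - s • D) * star U) - U * (c • 1) * star U := by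
        rw [← hMconj, ← hsmul]
    _ = U * ((1 - s • D) * (1 - s • D)) * star U - U * (c • 1) * star U := by rw [conjmul]
    _ = U * ((1 - s • D) * (1 - s • D) - c • 1) * star U := conjsub _ _
    _ = U * Matrix.diagonal (fun i => (1 - s * d i) ^ 2 - c) * star U := by rw [e3]

theorem stmt_8 (n : ℕ) (hn : 1 ≤ n) (ρ : ℝ) (hρ : 0 < ρ)
    (g L : Matrix (Fin n) (Fin n) ℝ)
    (hg : g.PosDef) (hgL : (g * L).IsSymm)
    (hL : ∀ (μ : ℝ) (x : Fin n → ℝ), x ≠ 0 → L.mulVec x = μ • x → |μ| ≤ 1 / ρ)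
    (ε t : ℝ) (hε : ε ∈ Set.Ico 0 ρ) (ht : t ∈ Set.Icc (-1 : ℝ) 1) :
    (g * (1 - (ε * t) • L) ^ 2).IsSymm ∧
    (g * (1 - (ε * t) • L) ^ 2 - (1 - ε / ρ) ^ 2 • g).PosSemidef ∧
    ((1 + ε / ρ) ^ 2 • g - g * (1 - (ε * t) • L) ^ 2).PosSemidef := by
  obtain ⟨hε0, hερ⟩ := hε
  obtain ⟨ht1, ht2⟩ := ht
  set s : ℝ := ε * t with hsdef
  -- square root of g
  obtain ⟨S, hSpsd, hSsq⟩ : ∃ S : Matrix (Fin n) (Fin n) ℝ, S.PosSemidef ∧ S * S = g :=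
    by open scoped MatrixOrder in exact ⟨CFC.sqrt g, (CFC.sqrt_nonneg g).posSemidef, CFC.sqrt_mul_sqrt_self g hg.posSemidef.nonneg⟩
  have hSH : S.IsHermitian := hSpsd.1
  have hdetS : IsUnit S.det := by
    have h2 : S.det * S.det = g.det := by rw [← Matrix.det_mul, hSsq]
    have : g.det ≠ 0 := ne_of_gt hg.det_pos
    refine isUnit_iff_ne_zero.mpr fun h0 => this ?_
    rw [← h2, h0, mul_zero]
  haveI : Invertible S := Matrix.invertibleOfIsUnitDet S hdetS
  set T : Matrix (Fin n) (Fin n) ℝ := S⁻¹ with hTdef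
  have hST : S * T = 1 := Matrix.mul_nonsing_inv S hdetS
  have hTS : T * S = 1 := Matrix.nonsing_inv_mul S hdetS
  have hST' : ∀ X : Matrix (Fin n) (Fin n) ℝ, S * (T * X) = X := fun X => by
    rw [← mul_assoc, hST, one_mul]
  have hTS' : ∀ X : Matrix (Fin n) (Fin n) ℝ, T * (S * X) = X := fun X => by
    rw [← mul_assoc, hTS, one_mul]
  have hTH : T.IsHermitian := by
    rw [Matrix.IsHermitian, hTdef, Matrix.conjTranspose_nonsing_inv, hSH.eq]
  clear_value T
  -- M = S L S⁻¹ is symmetric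
  set M : Matrix (Fin n) (Fin n) ℝ := S * L * T with hMdef
  clear_value M
  have hgsymm : gᵀ = g := by rw [← Matrix.conjTranspose_eq_transpose_of_trivial]; exact hg.isHermitian.eq
  have hkey : Lᵀ * (S * S) = (S * S) * L := by
    rw [hSsq]
    have h1 : (g * L)ᵀ = g * L := hgL
    rw [Matrix.transpose_mul, hgsymm] at h1
    exact h1
  have hMH : M.IsHermitian := by
    have hMt : Mᵀ = T * Lᵀ * S := by
      rw [hMdef, Matrix.transpose_mul, Matrix.transpose_mul]
      have : Tᵀ = T := by rw [← Matrix.conjTranspose_eq_transpose_of_trivial]; exact hTH.eq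
      have hS' : Sᵀ = S := by rw [← Matrix.conjTranspose_eq_transpose_of_trivial]; exact hSH.eq
      rw [this, hS', mul_assoc]
    have heq : T * Lᵀ * S = S * L * T := by
      have h := congrArg (fun X => T * X * T) hkey
      calc T * Lᵀ * S = T * Lᵀ * S * (S * T) := by rw [hST, mul_one]
        _ = T * (Lᵀ * (S * S)) * T := by noncomm_ring
        _ = T * ((S * S) * L) * T := by rw [hkey]
        _ = (T * S) * (S * L * T) := by noncomm_ring
        _ = S * L * T := by rw [hTS, one_mul]
    rw [Matrix.IsHermitian, Matrix.conjTranspose_eq_transpose_of_trivial, hMt, heq]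
    exact hMdef.symm
  -- eigenvalue bound for M
  have heig : ∀ i, |hMH.eigenvalues i| ≤ 1 / ρ := by
    intro i
    have hv := hMH.mulVec_eigenvectorBasis i
    set v : Fin n → ℝ := ⇑(hMH.eigenvectorBasis i) with hvdef
    have hvne : v ≠ 0 := by
      intro h0
      have := hMH.eigenvectorBasis.orthonormal.ne_zero i
      apply this
      ext j
      exact congrFun h0 j
    set μ : ℝ := hMH.eigenvalues i with hμdef
    have hv' : M *ᵥ v = μ • v := by simpa using hv
    have hxne : T *ᵥ v ≠ 0 := by
      intro h0
      apply hvne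
      have : S *ᵥ (T *ᵥ v) = v := by rw [Matrix.mulVec_mulVec, hST, Matrix.one_mulVec]
      rw [h0, Matrix.mulVec_zero] at this
      exact this.symm
    have hLx : L *ᵥ (T *ᵥ v) = μ • (T *ᵥ v) := by
      have hLTMS : L = T * M * S := by
        rw [hMdef]
        calc L = (T * S) * L * (T * S) := by rw [hTS, one_mul, mul_one]
          _ = T * (S * L * T) * S := by noncomm_ring
      have h1 : S *ᵥ (T *ᵥ v) = v := by rw [Matrix.mulVec_mulVec, hST, Matrix.one_mulVec]
      rw [hLTMS, ← Matrix.mulVec_mulVec, h1, ← Matrix.mulVec_mulVec, hv', Matrix.mulVec_smul]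
    exact hL μ (T *ᵥ v) hxne hLx
  -- scalar bounds
  have hsabs : |s| ≤ ε := by
    rw [hsdef, abs_mul, abs_of_nonneg hε0]
    have : |t| ≤ 1 := abs_le.mpr ⟨ht1, ht2⟩
    nlinarith [abs_nonneg t]
  have hbounds : ∀ i, (1 - ε / ρ) ^ 2 ≤ (1 - s * hMH.eigenvalues i) ^ 2 ∧
      (1 - s * hMH.eigenvalues i) ^ 2 ≤ (1 + ε / ρ) ^ 2 := by
    intro i
    have h1 : |s * hMH.eigenvalues i| ≤ ε / ρ := by
      rw [abs_mul]
      calc |s| * |hMH.eigenvalues i| ≤ ε * (1 / ρ) := by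
            apply mul_le_mul hsabs (heig i) (abs_nonneg _) hε0
        _ = ε / ρ := by ring
    have h2 : ε / ρ < 1 := (div_lt_one hρ).mpr hερ
    have h3 : 0 ≤ ε / ρ := div_nonneg hε0 hρ.le
    rw [abs_le] at h1
    constructor <;> nlinarith [h1.1, h1.2, h2, h3]
  -- N = 1 - s • M
  set N : Matrix (Fin n) (Fin n) ℝ := 1 - s • M with hNdef
  clear_value N
  have hNfact : N = S * ((1 : Matrix (Fin n) (Fin n) ℝ) - s • L) * T := by
    rw [hNdef, hMdef, Matrix.mul_sub, Matrix.sub_mul, mul_one, hST, Matrix.mul_smul,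
      Matrix.smul_mul]
  have hGfact : g * (1 - s • L) ^ 2 = S * (N * N) * S := by
    rw [pow_two, ← hSsq, hNfact]
    simp only [mul_assoc, hTS', hST', hTS, hST, mul_one]
  set U : Matrix (Fin n) (Fin n) ℝ := (hMH.eigenvectorUnitary : Matrix (Fin n) (Fin n) ℝ)
    with hUdef
  have hconj := diag_conj_aux hMH s
  -- generic PSD conjugation
  have hconjPSD : ∀ c : ℝ, (∀ i, 0 ≤ (1 - s * hMH.eigenvalues i) ^ 2 - c) →
      (N * N - c • (1 : Matrix (Fin n) (Fin n) ℝ)).PosSemidef := by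
    intro c hc
    rw [hNdef, hconj c]
    rw [Matrix.star_eq_conjTranspose]
    exact (Matrix.PosSemidef.diagonal hc).mul_mul_conjTranspose_same U
  have hconjPSD' : ∀ c : ℝ, (∀ i, 0 ≤ c - (1 - s * hMH.eigenvalues i) ^ 2) →
      (c • (1 : Matrix (Fin n) (Fin n) ℝ) - N * N).PosSemidef := by
    intro c hc
    have key : c • (1 : Matrix (Fin n) (Fin n) ℝ) - N * N
        = U * Matrix.diagonal (fun i => c - (1 - s * hMH.eigenvalues i) ^ 2) * star U := by
      calc c • (1 : Matrix (Fin n) (Fin n) ℝ) - N * N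
          = -((1 - s • M) * (1 - s • M) - c • 1) := by rw [hNdef, neg_sub]
        _ = -(U * Matrix.diagonal (fun i => (1 - s * hMH.eigenvalues i) ^ 2 - c) * star U) := by
            rw [hconj c]
        _ = U * (-Matrix.diagonal (fun i => (1 - s * hMH.eigenvalues i) ^ 2 - c)) * star U := by
            rw [Matrix.mul_neg, Matrix.neg_mul]
        _ = U * Matrix.diagonal (fun i => c - (1 - s * hMH.eigenvalues i) ^ 2) * star U := by
            have : -Matrix.diagonal (fun i => (1 - s * hMH.eigenvalues i) ^ 2 - c)
                = Matrix.diagonal (fun i => c - (1 - s * hMH.eigenvalues i) ^ 2) := by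
              rw [Matrix.diagonal_neg]
              have : (fun i => -((1 - s * hMH.eigenvalues i) ^ 2 - c))
                  = (fun i => c - (1 - s * hMH.eigenvalues i) ^ 2) := funext fun i => by ring
              rw [this]
            rw [this]
    rw [key, Matrix.star_eq_conjTranspose]
    exact (Matrix.PosSemidef.diagonal hc).mul_mul_conjTranspose_same U
  -- PSD transfer through S
  have hSconj : ∀ P : Matrix (Fin n) (Fin n) ℝ, P.PosSemidef → (S * P * S).PosSemidef := by
    intro P hP
    have : S * P * S = S * P * Sᴴ := by rw [hSH.eq]
    rw [this]
    exact hP.mul_mul_conjTranspose_same S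
  -- assemble
  have hdiff1 : g * (1 - s • L) ^ 2 - (1 - ε / ρ) ^ 2 • g
      = S * (N * N - ((1 - ε / ρ) ^ 2) • (1 : Matrix (Fin n) (Fin n) ℝ)) * S := by
    rw [hGfact, Matrix.mul_sub, Matrix.sub_mul]
    congr 1
    rw [Matrix.mul_smul, Matrix.smul_mul, mul_one, hSsq]
  have hdiff2 : (1 + ε / ρ) ^ 2 • g - g * (1 - s • L) ^ 2
      = S * (((1 + ε / ρ) ^ 2) • (1 : Matrix (Fin n) (Fin n) ℝ) - N * N) * S := by
    rw [hGfact, Matrix.mul_sub, Matrix.sub_mul]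
    congr 1
    rw [Matrix.mul_smul, Matrix.smul_mul, mul_one, hSsq]
  have hpsd1 : (g * (1 - s • L) ^ 2 - (1 - ε / ρ) ^ 2 • g).PosSemidef := by
    rw [hdiff1]
    exact hSconj _ (hconjPSD _ fun i => by linarith [(hbounds i).1])
  have hpsd2 : ((1 + ε / ρ) ^ 2 • g - g * (1 - s • L) ^ 2).PosSemidef := by
    rw [hdiff2]
    exact hSconj _ (hconjPSD' _ fun i => by linarith [(hbounds i).2])
  refine ⟨?_, hpsd1, hpsd2⟩
  -- symmetry
  have hHerm : (g * (1 - s • L) ^ 2).IsHermitian := by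
    rw [hGfact]
    have hNH : (N * N).IsHermitian := by
      have hN1 : N.IsHermitian := by
        rw [Matrix.IsHermitian, hNdef, Matrix.conjTranspose_sub, Matrix.conjTranspose_smul,
          Matrix.conjTranspose_one, hMH.eq, star_trivial]
      rw [Matrix.IsHermitian, Matrix.conjTranspose_mul, hN1.eq]
    rw [Matrix.IsHermitian, Matrix.conjTranspose_mul, Matrix.conjTranspose_mul, hSH.eq,
      hNH.eq]
    noncomm_ring
  rw [Matrix.IsSymm, ← Matrix.conjTranspose_eq_transpose_of_trivial]
  exact hHerm
end

section
/- Let n ≥ 1, let g be a real symmetric positive definite n×n matrix, and let L be a real n×n matrix such that gL is symmetric and such that every real eigenvalue μ of L satisfies |μ| ≤ 1/ρ, where ρ > 0. Fix ε ∈ [0, ρ) and t ∈ [−1,1], and set G := g (I − εtL)². Then G is invertible and its inverse satisfies (1 + ε/ρ)^{−2} g^{−1} ≼ G^{−1} ≼ (1 − ε/ρ)^{−2} g^{−1} in the Loewner order. -/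
open Matrix

lemma aux_diag_conj (n : ℕ) (U : Matrix (Fin n) (Fin n) ℝ)
    (hU1 : U * star U = 1) (hU2 : star U * U = 1) (f h : Fin n → ℝ) :
    (U * diagonal f * star U) * (U * diagonal h * star U)
      = U * diagonal (fun i => f i * h i) * star U := by
  have : U * diagonal f * star U * (U * diagonal h * star U)
      = U * (diagonal f * (star U * U) * diagonal h) * star U := by
    noncomm_ring
  rw [this, hU2, mul_one, diagonal_mul_diagonal]

lemma aux_smul_one (n : ℕ) (U : Matrix (Fin n) (Fin n) ℝ)
    (hU1 : U * star U = 1) (κ : ℝ) :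
    U * diagonal (fun _ => κ) * star U = κ • (1 : Matrix (Fin n) (Fin n) ℝ) := by
  have : (fun _ : Fin n => κ) = κ • (fun _ : Fin n => (1:ℝ)) := by
    funext i; simp
  rw [this, diagonal_smul, diagonal_one]
  simp [mul_smul_comm, smul_mul_assoc, hU1]

lemma aux_main (n : ℕ) (ρ ε s : ℝ) (hρ : 0 < ρ) (hε0 : 0 ≤ ε) (hερ : ε < ρ) (hs : |s| ≤ ε)
    (A : Matrix (Fin n) (Fin n) ℝ) (hA : A.IsHermitian)
    (hAev : ∀ i, |hA.eigenvalues i| ≤ 1 / ρ) :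
    IsUnit ((1 - s • A) ^ 2) ∧
    (((1 - s • A) ^ 2)⁻¹ - ((1 + ε / ρ) ^ 2)⁻¹ • 1).PosSemidef ∧
    (((1 - ε / ρ) ^ 2)⁻¹ • (1 : Matrix (Fin n) (Fin n) ℝ) - ((1 - s • A) ^ 2)⁻¹).PosSemidef := by
  set d := hA.eigenvalues with hd
  set U : Matrix (Fin n) (Fin n) ℝ := (hA.eigenvectorUnitary : Matrix (Fin n) (Fin n) ℝ) with hUdef
  have hU1 : U * star U = 1 := Matrix.mem_unitaryGroup_iff.mp hA.eigenvectorUnitary.2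
  have hU2 : star U * U = 1 := Matrix.mem_unitaryGroup_iff'.mp hA.eigenvectorUnitary.2
  have hspec : A = U * diagonal d * star U := by
    have := hA.spectral_theorem
    simpa [RCLike.ofReal_real_eq_id] using this
  -- scalar bounds
  have hερ1 : ε / ρ < 1 := (div_lt_one hρ).2 hερ
  set c : Fin n → ℝ := fun i => 1 - s * d i with hc
  have hsd : ∀ i, |s * d i| ≤ ε / ρ := by
    intro i
    rw [abs_mul]
    calc |s| * |d i| ≤ ε * (1 / ρ) :=
          mul_le_mul hs (hAev i) (abs_nonneg _) hε0
      _ = ε / ρ := by ring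
  have hc_lb : ∀ i, 1 - ε / ρ ≤ c i := by
    intro i; have := (abs_le.mp (hsd i)).2; simp only [hc]; linarith
  have hc_ub : ∀ i, c i ≤ 1 + ε / ρ := by
    intro i; have := (abs_le.mp (hsd i)).1; simp only [hc]; linarith
  have hc_pos : ∀ i, 0 < c i := fun i => lt_of_lt_of_le (by linarith) (hc_lb i)
  -- matrix identities
  have hB : 1 - s • A = U * diagonal c * star U := by
    have h1 : diagonal c = 1 - s • diagonal d := by
      rw [← diagonal_one, ← diagonal_smul, ← diagonal_sub]
      rfl
    rw [h1, mul_sub, sub_mul, mul_one, hU1, mul_smul_comm, smul_mul_assoc, ← hspec]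
  have hP : (1 - s • A) ^ 2 = U * diagonal (fun i => c i ^ 2) * star U := by
    rw [sq, hB, aux_diag_conj n U hU1 hU2]
    have hcc : (fun i => c i * c i) = (fun i => c i ^ 2) := by funext i; ring
    rw [hcc]
  have hinv1 : (U * diagonal (fun i => c i ^ 2) * star U) *
      (U * diagonal (fun i => (c i ^ 2)⁻¹) * star U) = 1 := by
    rw [aux_diag_conj n U hU1 hU2]
    have : (fun i => c i ^ 2 * (c i ^ 2)⁻¹) = fun _ : Fin n => (1:ℝ) := by
      funext i
      exact mul_inv_cancel₀ (pow_ne_zero _ (hc_pos i).ne')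
    rw [this, diagonal_one, mul_one, hU1]
  have hPinv : ((1 - s • A) ^ 2)⁻¹ = U * diagonal (fun i => (c i ^ 2)⁻¹) * star U := by
    exact inv_eq_right_inv (by rw [hP]; exact hinv1)
  have hunit : IsUnit ((1 - s • A) ^ 2) := by
    rw [Matrix.isUnit_iff_isUnit_det]
    apply IsUnit.of_mul_eq_one ((U * diagonal (fun i => (c i ^ 2)⁻¹) * star U).det)
    rw [← det_mul, hP, hinv1, det_one]
  refine ⟨hunit, ?_, ?_⟩
  · have heq : ((1 - s • A) ^ 2)⁻¹ - ((1 + ε / ρ) ^ 2)⁻¹ • 1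
        = U * diagonal (fun i => (c i ^ 2)⁻¹ - ((1 + ε / ρ) ^ 2)⁻¹) * star U := by
      rw [hPinv, ← aux_smul_one n U hU1 (((1 + ε / ρ) ^ 2)⁻¹)]
      rw [← sub_mul, ← mul_sub, ← diagonal_sub]
    rw [heq, star_eq_conjTranspose]
    refine (posSemidef_diagonal_iff.mpr ?_).mul_mul_conjTranspose_same U
    intro i
    have h1 : c i ^ 2 ≤ (1 + ε / ρ) ^ 2 := pow_le_pow_left₀ (hc_pos i).le (hc_ub i) 2
    have h2 : (0:ℝ) < c i ^ 2 := pow_pos (hc_pos i) 2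
    have := inv_anti₀ h2 h1
    linarith
  · have heq : ((1 - ε / ρ) ^ 2)⁻¹ • (1 : Matrix (Fin n) (Fin n) ℝ) - ((1 - s • A) ^ 2)⁻¹
        = U * diagonal (fun i => ((1 - ε / ρ) ^ 2)⁻¹ - (c i ^ 2)⁻¹) * star U := by
      rw [hPinv, ← aux_smul_one n U hU1 (((1 - ε / ρ) ^ 2)⁻¹)]
      rw [← sub_mul, ← mul_sub, ← diagonal_sub]
    rw [heq, star_eq_conjTranspose]
    refine (posSemidef_diagonal_iff.mpr ?_).mul_mul_conjTranspose_same U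
    intro i
    have h1 : (1 - ε / ρ) ^ 2 ≤ c i ^ 2 := pow_le_pow_left₀ (by linarith) (hc_lb i) 2
    have h2 : (0:ℝ) < (1 - ε / ρ) ^ 2 := pow_pos (by linarith) 2
    have := inv_anti₀ h2 h1
    linarith
theorem stmt_9 (n : ℕ) (hn : 1 ≤ n) (ρ : ℝ) (hρ : 0 < ρ)
    (g L : Matrix (Fin n) (Fin n) ℝ)
    (hg : g.PosDef) (hgL : (g * L).IsSymm)
    (hL : ∀ (μ : ℝ) (x : Fin n → ℝ), x ≠ 0 → L.mulVec x = μ • x → |μ| ≤ 1 / ρ)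
    (ε t : ℝ) (hε : ε ∈ Set.Ico 0 ρ) (ht : t ∈ Set.Icc (-1 : ℝ) 1) :
    IsUnit (g * (1 - (ε * t) • L) ^ 2) ∧
    ((g * (1 - (ε * t) • L) ^ 2)⁻¹ - ((1 + ε / ρ) ^ 2)⁻¹ • g⁻¹).PosSemidef ∧
    (((1 - ε / ρ) ^ 2)⁻¹ • g⁻¹ - (g * (1 - (ε * t) • L) ^ 2)⁻¹).PosSemidef := by
  obtain ⟨hε0, hερ⟩ := hε
  obtain ⟨ht1, ht2⟩ := ht
  set s : ℝ := ε * t with hsdef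
  have hs : |s| ≤ ε := by
    rw [hsdef, abs_mul, abs_of_nonneg hε0]
    calc ε * |t| ≤ ε * 1 := by
          apply mul_le_mul_of_nonneg_left _ hε0
          exact abs_le.mpr ⟨ht1, ht2⟩
      _ = ε := mul_one ε
  -- square root of g
  have hgps : g.PosSemidef := hg.posSemidef
  obtain ⟨R, hRps, hRR⟩ : ∃ R : Matrix (Fin n) (Fin n) ℝ, R.PosSemidef ∧ R * R = g := by
    open scoped MatrixOrder in
    exact ⟨CFC.sqrt g, (CFC.sqrt_nonneg g).posSemidef, CFC.sqrt_mul_sqrt_self g hgps.nonneg⟩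
  have hRH : Rᴴ = R := hRps.1
  have hgdet : IsUnit g.det := isUnit_iff_ne_zero.mpr (ne_of_gt hg.det_pos)
  have hRdet : IsUnit R.det := by
    have : R.det * R.det = g.det := by rw [← det_mul, hRR]
    exact isUnit_of_mul_isUnit_left (this ▸ hgdet)
  have hRu : IsUnit R := (Matrix.isUnit_iff_isUnit_det R).mpr hRdet
  have hRRinv : R * R⁻¹ = 1 := mul_nonsing_inv R hRdet
  have hRinvR : R⁻¹ * R = 1 := nonsing_inv_mul R hRdet
  have hRinvH : (R⁻¹)ᴴ = R⁻¹ := by rw [conjTranspose_nonsing_inv, hRH]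
  have hgH : gᴴ = g := hg.isHermitian
  have hLgH : Lᴴ * g = g * L := by
    have h1 : (g * L)ᴴ = g * L := by
      rw [conjTranspose_eq_transpose_of_trivial]; exact hgL
    calc Lᴴ * g = Lᴴ * gᴴ := by rw [hgH]
      _ = (g * L)ᴴ := (conjTranspose_mul g L).symm
      _ = g * L := h1
  set A : Matrix (Fin n) (Fin n) ℝ := R * L * R⁻¹ with hAdef
  have hAH : A.IsHermitian := by
    show Aᴴ = A
    apply hRu.mul_left_cancel
    apply hRu.mul_right_cancel
    have lhs : R * Aᴴ * R = g * L := by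
      rw [hAdef, conjTranspose_mul, conjTranspose_mul, hRinvH, hRH]
      calc R * (R⁻¹ * (Lᴴ * R)) * R = (R * R⁻¹) * (Lᴴ * R) * R := by
              rw [Matrix.mul_assoc R R⁻¹ (Lᴴ * R)]
        _ = Lᴴ * R * R := by rw [hRRinv, Matrix.one_mul]
        _ = Lᴴ * (R * R) := by rw [Matrix.mul_assoc]
        _ = Lᴴ * g := by rw [hRR]
        _ = g * L := hLgH
    have rhs : R * A * R = g * L := by
      rw [hAdef]
      calc R * (R * L * R⁻¹) * R = R * R * L * (R⁻¹ * R) := by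
            simp only [Matrix.mul_assoc]
        _ = R * R * L := by rw [hRinvR, Matrix.mul_one]
        _ = g * L := by rw [hRR]
    rw [Matrix.mul_assoc] at lhs rhs
    rw [Matrix.mul_assoc, lhs, Matrix.mul_assoc, rhs]
  -- eigenvalue bound transfer
  have hAev : ∀ i, |hAH.eigenvalues i| ≤ 1 / ρ := by
    intro i
    set v : Fin n → ℝ := ⇑(hAH.eigenvectorBasis i) with hvdef
    have hv0 : v ≠ 0 := fun h => hAH.eigenvectorBasis.orthonormal.ne_zero i
      (by ext j; simpa [hvdef] using congrFun h j)
    have hAv : A *ᵥ v = hAH.eigenvalues i • v := hAH.mulVec_eigenvectorBasis i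
    set w : Fin n → ℝ := R⁻¹ *ᵥ v with hwdef
    have hw0 : w ≠ 0 := by
      intro h
      apply hv0
      have : v = R *ᵥ w := by
        rw [hwdef, mulVec_mulVec, hRRinv, one_mulVec]
      rw [this, h, mulVec_zero]
    have hLA : L * R⁻¹ = R⁻¹ * A := by
      rw [hAdef]
      calc L * R⁻¹ = 1 * (L * R⁻¹) := (Matrix.one_mul _).symm
        _ = R⁻¹ * R * (L * R⁻¹) := by rw [hRinvR]
        _ = R⁻¹ * (R * L * R⁻¹) := by simp only [Matrix.mul_assoc]
    have hLw : L *ᵥ w = hAH.eigenvalues i • w := by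
      rw [hwdef, mulVec_mulVec, hLA, ← mulVec_mulVec, hAv, mulVec_smul]
    exact hL _ w hw0 hLw
  obtain ⟨hPu, hP1, hP2⟩ := aux_main n ρ ε s hρ hε0 hερ hs A hAH hAev
  -- transfer back
  have hBL : R * (1 - s • L) = (1 - s • A) * R := by
    have hAR : A * R = R * L := by
      rw [hAdef, Matrix.mul_assoc, hRinvR, Matrix.mul_one]
    rw [mul_sub, sub_mul, Matrix.mul_one, Matrix.one_mul, mul_smul_comm, smul_mul_assoc, hAR]
  have hG : g * (1 - s • L) ^ 2 = R * (1 - s • A) ^ 2 * R := by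
    calc g * (1 - s • L) ^ 2 = R * R * ((1 - s • L) * (1 - s • L)) := by rw [hRR, sq]
      _ = R * (R * (1 - s • L)) * (1 - s • L) := by simp only [Matrix.mul_assoc]
      _ = R * ((1 - s • A) * R) * (1 - s • L) := by rw [hBL]
      _ = R * (1 - s • A) * (R * (1 - s • L)) := by simp only [Matrix.mul_assoc]
      _ = R * (1 - s • A) * ((1 - s • A) * R) := by rw [hBL]
      _ = R * ((1 - s • A) * (1 - s • A)) * R := by simp only [Matrix.mul_assoc]
      _ = R * (1 - s • A) ^ 2 * R := by rw [← sq]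
  have hGu : IsUnit (g * (1 - s • L) ^ 2) := by
    rw [hG]; exact (hRu.mul hPu).mul hRu
  have hGinv : (g * (1 - s • L) ^ 2)⁻¹ = R⁻¹ * ((1 - s • A) ^ 2)⁻¹ * R⁻¹ := by
    rw [hG, Matrix.mul_inv_rev, Matrix.mul_inv_rev, Matrix.mul_assoc]
  have hginv : g⁻¹ = R⁻¹ * R⁻¹ := by rw [← hRR, Matrix.mul_inv_rev]
  refine ⟨hGu, ?_, ?_⟩
  · have heq : (g * (1 - s • L) ^ 2)⁻¹ - ((1 + ε / ρ) ^ 2)⁻¹ • g⁻¹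
        = R⁻¹ * (((1 - s • A) ^ 2)⁻¹ - ((1 + ε / ρ) ^ 2)⁻¹ • 1) * (R⁻¹)ᴴ := by
      rw [hRinvH, hGinv, hginv, mul_sub, sub_mul, mul_smul_comm, smul_mul_assoc,
        Matrix.mul_one]
    rw [heq]
    exact hP1.mul_mul_conjTranspose_same R⁻¹
  · have heq : ((1 - ε / ρ) ^ 2)⁻¹ • g⁻¹ - (g * (1 - s • L) ^ 2)⁻¹
        = R⁻¹ * (((1 - ε / ρ) ^ 2)⁻¹ • 1 - ((1 - s • A) ^ 2)⁻¹) * (R⁻¹)ᴴ := by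
      rw [hRinvH, hGinv, hginv, mul_sub, sub_mul, mul_smul_comm, smul_mul_assoc,
        Matrix.mul_one]
    rw [heq]
    exact hP2.mul_mul_conjTranspose_same R⁻¹
end
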